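/- arXiv:1412.3089 — 8 statements merged into one kernel-verified Lean document; each statement's English description precedes it below -/
import Mathlib

section
/- For all positive integers x and y, if x divides y, then S_r(x) divides S_r(y), where S_r is the r-th Schemmel totient function. -/
/-- The `r`-th Schemmel totient function: multiplicative, with
`S_r(p^a) = 0` if `p ≤ r` and `S_r(p^a) = p^(a-1) * (p - r)` if `p > r`. -/
def schemmel (r n : ℕ) : ℕ :=
  n.factorization.prod (fun p a => if p ≤ r then 0 else p ^ (a - 1) * (p - r))

theorem schemmel_dvd_of_dvd (r x y : ℕ) (hr : 0 < r) (hx : 0 < x) (hy : 0 < y)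
    (h : x ∣ y) : schemmel r x ∣ schemmel r y := by
  unfold schemmel
  rw [Finsupp.prod, Finsupp.prod]
  by_cases hz : ∃ p ∈ y.factorization.support, p ≤ r
  · obtain ⟨p, hp, hpr⟩ := hz
    have : (∏ q ∈ y.factorization.support,
        if q ≤ r then 0 else q ^ (y.factorization q - 1) * (q - r)) = 0 := by
      apply Finset.prod_eq_zero hp
      simp [hpr]
    rw [this]
    exact dvd_zero _
  · push_neg at hz
    have hsub : x.factorization.support ⊆ y.factorization.support := by
      intro p hp
      rw [Nat.support_factorization] at *
      exact Nat.mem_primeFactors.mpr ⟨Nat.prime_of_mem_primeFactors hp,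
        (Nat.dvd_of_mem_primeFactors hp).trans h, hy.ne'⟩
    calc (∏ p ∈ x.factorization.support,
          if p ≤ r then 0 else p ^ (x.factorization p - 1) * (p - r))
        ∣ ∏ p ∈ x.factorization.support,
          if p ≤ r then 0 else p ^ (y.factorization p - 1) * (p - r) := by
          apply Finset.prod_dvd_prod_of_dvd
          intro p hp
          have hpr : ¬ p ≤ r := not_le.mpr (hz p (hsub hp))
          simp only [hpr, if_false]
          apply mul_dvd_mul_right
          apply pow_dvd_pow
          exact Nat.sub_le_sub_right ((Nat.factorization_le_iff_dvd hx.ne' hy.ne').mpr h p) 1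
      _ ∣ ∏ p ∈ y.factorization.support,
          if p ≤ r then 0 else p ^ (y.factorization p - 1) * (p - r) :=
          Finset.prod_dvd_prod_of_subset _ _ _ hsub
end

section
/- Let r, α be nonnegative integers and p a prime such that r + 1 is prime. Then (r+1)^α · p is a Schemmel nontotient number of order r if and only if for every nonnegative integer t ≤ α, p ≠ (r+1)^t + r and (r+1)^t · p + r is not prime. -/
lemma schemmel_prime_pow {r q : ℕ} (hq : q.Prime) (a : ℕ) (ha : a ≠ 0) :
    schemmel r (q ^ a) = if q ≤ r then 0 else q ^ (a - 1) * (q - r) := by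
  unfold schemmel
  rw [hq.factorization_pow, Finsupp.prod, Finsupp.support_single_ne_zero _ ha]
  simp

lemma schemmel_mul {r m n : ℕ} (h : Nat.Coprime m n) :
    schemmel r (m * n) = schemmel r m * schemmel r n := by
  unfold schemmel
  rw [Nat.factorization_mul_of_coprime h, Finsupp.prod_add_index_of_disjoint]
  simpa using h.disjoint_primeFactors

theorem prime_pow_mul_nontotient_iff (r α p : ℕ) (hr : (r + 1).Prime) (hp : p.Prime) :
    (¬ ∃ x : ℕ, 0 < x ∧ schemmel r x = (r + 1) ^ α * p) ↔
      ∀ t : ℕ, t ≤ α → p ≠ (r + 1) ^ t + r ∧ ¬ ((r + 1) ^ t * p + r).Prime := by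
  have hr1 : 1 ≤ r := by
    rcases Nat.eq_or_lt_of_le hr.two_le with h | h <;> omega
  constructor
  · -- nontotient → conditions
    intro hne t ht
    constructor
    · -- p ≠ (r+1)^t + r
      intro hpe
      rcases Nat.eq_zero_or_pos t with ht0 | htpos
      · -- p = r + 1
        subst ht0
        simp only [pow_zero] at hpe
        apply hne
        refine ⟨(r + 1) ^ (α + 2), pow_pos (by omega) _, ?_⟩
        rw [schemmel_prime_pow hr (α + 2) (by omega)]
        rw [if_neg (show ¬ (r + 1 ≤ r) by omega), show r + 1 - r = 1 by omega, mul_one,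
          show α + 2 - 1 = α + 1 by omega, pow_succ]
        congr 1
        omega
      · -- t ≥ 1 : x = (r+1)^(α+1-t) * p^2
        apply hne
        have hps : p ≠ r + 1 := by
          have : (r+1)^1 ≤ (r+1)^t := Nat.pow_le_pow_right (by omega) htpos
          simp at this; omega
        have hcop : Nat.Coprime ((r + 1) ^ (α + 1 - t)) (p ^ 2) :=
          Nat.Coprime.pow _ _ (((Nat.coprime_primes hr hp).mpr (fun h => hps h.symm)))
        refine ⟨(r + 1) ^ (α + 1 - t) * p ^ 2,
          Nat.mul_pos (pow_pos (by omega) _) (pow_pos hp.pos _), ?_⟩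
        rw [schemmel_mul hcop, schemmel_prime_pow hr (α + 1 - t) (by omega),
          schemmel_prime_pow hp 2 (by omega)]
        have h1 : ¬ (r + 1 ≤ r) := by omega
        have h2 : ¬ (p ≤ r) := by
          have := Nat.one_le_pow t (r+1) (by omega); omega
        rw [if_neg h1, if_neg h2]
        have e1 : r + 1 - r = 1 := by omega
        have e2 : p - r = (r + 1) ^ t := by omega
        have e3 : α + 1 - t - 1 = α - t := by omega
        have hpow : (r+1)^(α-t) * (r+1)^t = (r+1)^α := by
          rw [← pow_add]; congr 1; omega
        rw [e1, e2, e3, mul_one, show (2:ℕ) - 1 = 1 by norm_num, pow_one,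
          show (r+1)^(α-t) * (p * (r+1)^t) = ((r+1)^(α-t) * (r+1)^t) * p by ring, hpow]
    · -- ¬ ((r+1)^t * p + r).Prime
      intro hq
      apply hne
      set q := (r + 1) ^ t * p + r with hqdef
      have hX : 1 * 2 ≤ (r + 1) ^ t * p :=
        Nat.mul_le_mul (Nat.one_le_pow _ _ (by omega)) hp.two_le
      have hql : r + 1 < q := by omega
      have hcop : Nat.Coprime ((r + 1) ^ (α + 1 - t)) q :=
        Nat.Coprime.pow_left _ (((Nat.coprime_primes hr hq).mpr (by omega)))
      refine ⟨(r + 1) ^ (α + 1 - t) * q,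
        Nat.mul_pos (pow_pos (by omega) _) (by omega), ?_⟩
      rw [schemmel_mul hcop, schemmel_prime_pow hr (α + 1 - t) (by omega),
        show q = q ^ 1 by ring, schemmel_prime_pow hq 1 one_ne_zero]
      have h1 : ¬ (r + 1 ≤ r) := by omega
      have h2 : ¬ (q ≤ r) := by omega
      rw [if_neg h1, if_neg h2]
      have e1 : r + 1 - r = 1 := by omega
      have e2 : q - r = (r + 1) ^ t * p := by omega
      have e3 : α + 1 - t - 1 = α - t := by omega
      have hpow : (r+1)^(α-t) * (r+1)^t = (r+1)^α := by
        rw [← pow_add]; congr 1; omega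
      rw [e1, e2, e3, show (1:ℕ) - 1 = 0 by norm_num, pow_zero, one_mul, mul_one,
        show (r+1)^(α-t) * ((r+1)^t * p) = ((r+1)^(α-t) * (r+1)^t) * p by ring, hpow]
    -- conditions → nontotient
  · rintro hall ⟨x, hx, hS⟩
    by_cases hps : p = r + 1
    · exact (hall 0 (Nat.zero_le _)).1 (by rw [hps, pow_zero]; omega)
    have hN : (r + 1) ^ α * p ≠ 0 :=
      Nat.mul_ne_zero (pow_ne_zero _ (by omega)) hp.pos.ne'
    -- p divides the product
    have hpd : p ∣ x.factorization.prod
        (fun q a => if q ≤ r then 0 else q ^ (a - 1) * (q - r)) := by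
      rw [show (x.factorization.prod
        (fun q a => if q ≤ r then 0 else q ^ (a - 1) * (q - r))) = schemmel r x from rfl, hS]
      exact dvd_mul_left p _
    rw [Finsupp.prod] at hpd
    obtain ⟨q, hqmem, hpq⟩ := hp.prime.exists_mem_finset_dvd hpd
    have hq : q.Prime := Nat.prime_of_mem_primeFactors (by simpa using hqmem)
    have hqr : ¬ (q ≤ r) := by
      intro hle
      apply hN
      rw [← hS]
      unfold schemmel
      rw [Finsupp.prod]
      exact Finset.prod_eq_zero hqmem (by simp [hle])
    set a := x.factorization q with hadef
    have hfd : (if q ≤ r then 0 else q ^ (a - 1) * (q - r)) ∣ (r + 1) ^ α * p := by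
      rw [← hS]
      unfold schemmel
      rw [Finsupp.prod]
      exact Finset.dvd_prod_of_mem _ hqmem
    rw [if_neg hqr] at hfd hpq
    rcases hp.prime.dvd_mul.mp hpq with h1 | h2
    · -- q = p
      have hqp : q = p := ((Nat.prime_dvd_prime_iff_eq hp hq).mp (hp.dvd_of_dvd_pow h1)).symm
      subst hqp
      have hdd : (q - r) ∣ (r + 1) ^ α * q := dvd_trans (dvd_mul_left _ _) hfd
      have hcop : Nat.Coprime (q - r) q :=
        Nat.coprime_comm.mp (hq.coprime_iff_not_dvd.mpr
          (fun hd => by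
            have := Nat.le_of_dvd (by omega) hd
            omega))
      have : (q - r) ∣ (r + 1) ^ α := hcop.dvd_of_dvd_mul_right hdd
      obtain ⟨t, ht, he⟩ := (Nat.dvd_prime_pow hr).mp this
      exact (hall t ht).1 (by omega)
    · -- p ∣ q - r
      obtain ⟨m, hm⟩ := h2
      have hdd : (q - r) ∣ (r + 1) ^ α * p := dvd_trans (dvd_mul_left _ _) hfd
      rw [hm, mul_comm ((r+1)^α) p] at hdd
      have hmd : m ∣ (r + 1) ^ α := (Nat.mul_dvd_mul_iff_left hp.pos).mp hdd
      obtain ⟨t, ht, he⟩ := (Nat.dvd_prime_pow hr).mp hmd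
      subst he
      have hqe : q = (r + 1) ^ t * p + r := by
        have h' : q - r = (r+1)^t * p := by rw [hm, mul_comm]
        have hple : 1 * 1 ≤ (r+1)^t * p :=
          Nat.mul_le_mul (Nat.one_le_pow _ _ (by omega)) hp.one_le
        omega
      exact (hall t ht).2 (hqe ▸ hq)
end

section
/- Let r ≥ 3 be an odd integer. If S_r(x) = n for some positive integer x, where n is twice an odd number greater than 1, then x is a prime power p^a with p an odd prime and p > r; moreover either a = 1 and n + r = p, or a ≥ 2 and n = p^{a−1}(p − r). -/
theorem structure_of_preimage_two_mul_odd (r x n m : ℕ) (hrodd : Odd r) (hr3 : 3 ≤ r)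
    (hx : 0 < x) (hm : Odd m) (hm1 : 1 < m) (hn : n = 2 * m)
    (h : schemmel r x = n) :
    ∃ p a : ℕ, p.Prime ∧ Odd p ∧ r < p ∧ 0 < a ∧ x = p ^ a ∧
      ((a = 1 ∧ n + r = p) ∨ (2 ≤ a ∧ n = p ^ (a - 1) * (p - r))) := by
  subst hn
  have h4 : ¬ (4 ∣ 2 * m) := by
    obtain ⟨j, hj⟩ := hm
    rintro ⟨k, hk⟩
    omega
  rw [schemmel, Finsupp.prod] at h
  -- every prime factor exceeds r
  have hgt : ∀ p ∈ x.factorization.support, r < p := by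
    intro p hp
    by_contra hle
    push_neg at hle
    have h0 : (if p ≤ r then 0 else p ^ (x.factorization p - 1) * (p - r)) = 0 := by
      simp [hle]
    have h00 : (∏ t ∈ x.factorization.support,
        if t ≤ r then 0 else t ^ (x.factorization t - 1) * (t - r)) = 0 :=
      Finset.prod_eq_zero hp h0
    omega
  have hprime : ∀ p ∈ x.factorization.support, p.Prime := by
    intro p hp
    rw [Nat.support_factorization] at hp
    exact Nat.prime_of_mem_primeFactors hp
  have hodd : ∀ p ∈ x.factorization.support, Odd p := by
    intro p hp
    refine (hprime p hp).odd_of_ne_two ?_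
    have := hgt p hp
    omega
  have heven : ∀ p ∈ x.factorization.support,
      2 ∣ (if p ≤ r then 0 else p ^ (x.factorization p - 1) * (p - r)) := by
    intro p hp
    have h2 : 2 ∣ p - r := (Nat.Odd.sub_odd (hodd p hp) hrodd).two_dvd
    simp only [if_neg (not_le.mpr (hgt p hp))]
    exact Dvd.dvd.mul_left h2 _
  -- support is a singleton
  have hne : x.factorization.support.Nonempty := by
    rcases Finset.eq_empty_or_nonempty x.factorization.support with he | hne
    · rw [he, Finset.prod_empty] at h; omega
    · exact hne
  have hcard : x.factorization.support.card = 1 := by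
    rcases Nat.lt_or_ge x.factorization.support.card 2 with hlt | hge
    · have := Finset.card_pos.mpr hne
      omega
    · exfalso
      obtain ⟨p, hp, q, hq, hpq⟩ := Finset.one_lt_card.mp hge
      have hq' : q ∈ x.factorization.support.erase p :=
        Finset.mem_erase.mpr ⟨hpq.symm, hq⟩
      have hdq : (if q ≤ r then 0 else q ^ (x.factorization q - 1) * (q - r)) ∣
          ∏ t ∈ x.factorization.support.erase p,
            (if t ≤ r then 0 else t ^ (x.factorization t - 1) * (t - r)) :=
        Finset.dvd_prod_of_mem (fun t => if t ≤ r then 0 else t ^ (x.factorization t - 1) * (t - r)) hq'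
      have hsplit := Finset.mul_prod_erase x.factorization.support
        (fun t => if t ≤ r then 0 else t ^ (x.factorization t - 1) * (t - r)) hp
      have : (4 : ℕ) ∣ 2 * m := by
        rw [← h, ← hsplit]
        obtain ⟨u, hu⟩ := heven p hp
        obtain ⟨v, hv⟩ := (heven q hq).trans hdq
        beta_reduce
        rw [hu, hv]
        ring_nf
        exact ⟨u * v, by ring⟩
      exact h4 this
  obtain ⟨p, hps⟩ := Finset.card_eq_one.mp hcard
  have hp : p ∈ x.factorization.support := by rw [hps]; exact Finset.mem_singleton_self p
  have hxp : x = p ^ (x.factorization p) := by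
    conv_lhs => rw [← Nat.factorization_prod_pow_eq_self hx.ne']
    rw [Finsupp.prod, hps, Finset.prod_singleton]
  have hprod : p ^ (x.factorization p - 1) * (p - r) = 2 * m := by
    rw [hps, Finset.prod_singleton, if_neg (not_le.mpr (hgt p hp))] at h
    exact h
  have ha : 0 < x.factorization p := Nat.pos_of_ne_zero (Finsupp.mem_support_iff.mp hp)
  refine ⟨p, x.factorization p, hprime p hp, hodd p hp, hgt p hp, ha, hxp, ?_⟩
  rcases Nat.eq_or_lt_of_le ha with h1 | h2
  · left
    refine ⟨h1.symm, ?_⟩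
    rw [← h1, Nat.sub_self, pow_zero, one_mul] at hprod
    have := hgt p hp
    omega
  · right
    exact ⟨h2, hprod.symm⟩
end

section
/- Let r be an odd positive integer not divisible by any of 3, 5, 17, 257, 641, 65537, 6700417. Then there exist infinitely many primes p such that for every nonnegative integer α, 2^α · p is a Schemmel nontotient number of order r. -/
/-! ### Auxiliary lemmas on odd parts -/

lemma ordCompl2_prod {ι : Type*} (s : Finset ι) (f : ι → ℕ) :
    ordCompl[2] (∏ i ∈ s, f i) = ∏ i ∈ s, ordCompl[2] (f i) := by
  classical
  induction s using Finset.cons_induction with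
  | empty => simp
  | cons i s hi ih => rw [Finset.prod_cons, Finset.prod_cons, Nat.ordCompl_mul, ih]

lemma ordCompl2_two_pow (n : ℕ) : ordCompl[2] (2 ^ n) = 1 := by
  rw [Nat.Prime.factorization_pow Nat.prime_two, Finsupp.single_eq_same,
    Nat.div_self (pow_pos (by norm_num : (0:ℕ) < 2) n)]

lemma ordCompl2_of_odd {m : ℕ} (hm : ¬ 2 ∣ m) : ordCompl[2] m = m := by
  rw [Nat.factorization_eq_zero_of_not_dvd hm, pow_zero, Nat.div_one]

lemma ordCompl2_two_pow_mul_odd {α p : ℕ} (hp : ¬ 2 ∣ p) :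
    ordCompl[2] (2 ^ α * p) = p := by
  rw [Nat.ordCompl_mul, ordCompl2_two_pow, ordCompl2_of_odd hp, one_mul]

/-! ### Structure of solutions of `schemmel r x = 2 ^ α * p` -/

lemma schemmel_structure (r p α x : ℕ) (hrodd : Odd r) (hp : p.Prime)
    (hpodd : Odd p) (h : schemmel r x = 2 ^ α * p) :
    (∃ c, 1 ≤ c ∧ (2 ^ c * p + r).Prime) ∨ ∃ b, p = 2 ^ b + r := by
  have hp2 : ¬ 2 ∣ p := by rcases hpodd with ⟨k, hk⟩; omega
  have hprod : ∏ q ∈ x.factorization.support,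
      (if q ≤ r then 0 else q ^ (x.factorization q - 1) * (q - r)) = 2 ^ α * p := h
  have key : ∏ q ∈ x.factorization.support,
      ordCompl[2] (if q ≤ r then 0 else q ^ (x.factorization q - 1) * (q - r)) = p := by
    rw [← ordCompl2_prod, hprod, ordCompl2_two_pow_mul_odd hp2]
  have hex : ∃ q0 ∈ x.factorization.support,
      ordCompl[2] (if q0 ≤ r then 0 else q0 ^ (x.factorization q0 - 1) * (q0 - r)) = p := by
    by_contra hc
    push_neg at hc
    have hall : ∀ q ∈ x.factorization.support,
        ordCompl[2] (if q ≤ r then 0 else q ^ (x.factorization q - 1) * (q - r)) = 1 := by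
      intro q hq
      have hdvd : ordCompl[2] (if q ≤ r then 0 else q ^ (x.factorization q - 1) * (q - r)) ∣ p := by
        rw [← key]; exact Finset.dvd_prod_of_mem _ hq
      rcases Nat.Prime.eq_one_or_self_of_dvd hp _ hdvd with h1 | h1
      · exact h1
      · exact absurd h1 (hc q hq)
    rw [Finset.prod_eq_one hall] at key
    exact absurd key.symm hp.one_lt.ne'
  obtain ⟨q0, hq0mem, hq0⟩ := hex
  have hq0p : q0.Prime := Nat.prime_of_mem_primeFactors (by simpa using hq0mem)
  by_cases hle : q0 ≤ r
  · rw [if_pos hle] at hq0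
    rw [Nat.factorization_zero, Finsupp.coe_zero, Pi.zero_apply, pow_zero, Nat.zero_div] at hq0
    exact absurd hq0.symm hp.pos.ne'
  rw [if_neg hle] at hq0
  push_neg at hle
  have hq0odd : ¬ 2 ∣ q0 := by
    intro h2
    have hq02 : q0 = 2 := ((Nat.prime_dvd_prime_iff_eq Nat.prime_two hq0p).mp h2).symm
    subst hq02
    have hr1 : r = 1 := by rcases hrodd with ⟨k, hk⟩; omega
    subst hr1
    norm_num at hq0
    exact absurd hq0.symm hp.one_lt.ne'
  have hq0pow : ¬ 2 ∣ q0 ^ (x.factorization q0 - 1) :=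
    fun hd => hq0odd (Nat.prime_two.dvd_of_dvd_pow hd)
  rw [Nat.ordCompl_mul, ordCompl2_of_odd hq0pow] at hq0
  have hdvd : q0 ^ (x.factorization q0 - 1) ∣ p := ⟨_, hq0.symm⟩
  set v := (q0 - r).factorization 2 with hv
  have hqrpos : q0 - r ≠ 0 := by omega
  have heven : 2 ∣ q0 - r := by
    rcases Nat.Odd.sub_odd (hq0p.odd_of_ne_two (by rintro rfl; exact hq0odd ⟨1, rfl⟩)) hrodd
      with ⟨k, hk⟩
    omega
  have hself : 2 ^ v * ordCompl[2] (q0 - r) = q0 - r := Nat.ordProj_mul_ordCompl_eq_self (q0 - r) 2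
  have hv1 : 1 ≤ v := Nat.Prime.factorization_pos_of_dvd Nat.prime_two hqrpos heven
  rcases Nat.Prime.eq_one_or_self_of_dvd hp _ hdvd with h1 | h1
  · rw [h1, one_mul] at hq0
    left
    refine ⟨v, hv1, ?_⟩
    have hq0eq : q0 = 2 ^ v * p + r := by rw [hq0] at hself; omega
    rwa [← hq0eq]
  · have he : x.factorization q0 - 1 ≠ 0 := by
      intro h0
      rw [h0, pow_zero] at h1
      exact absurd h1.symm hp.one_lt.ne'
    have hq0eq : q0 = p :=
      (Nat.prime_dvd_prime_iff_eq hq0p hp).mp (h1 ▸ dvd_pow_self q0 he)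
    have hoc1 : ordCompl[2] (q0 - r) = 1 := by
      have h2 := hq0
      rw [h1] at h2
      exact Nat.eq_of_mul_eq_mul_left hp.pos (h2.trans (mul_one p).symm)
    right
    refine ⟨v, ?_⟩
    rw [hoc1, mul_one] at hself
    omega

/-! ### Covering congruences -/

/-- The residue needed modulo `m`. -/
def tres (r m c0 : ℕ) : ZMod m := -(r : ZMod m) * ((2 : ZMod m) ^ c0)⁻¹

lemma cover_one (m : ℕ) [NeZero m] (r p c e c0 : ℕ) (h2e : (2:ZMod m)^e = 1)
    (hu : IsUnit ((2:ZMod m)^c0)) (hc : c % e = c0)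
    (hp : (p : ZMod m) = tres r m c0) :
    m ∣ 2 ^ c * p + r := by
  have h1 : ((2:ZMod m))^c = (2:ZMod m)^c0 := by
    conv_lhs => rw [← Nat.div_add_mod c e]
    rw [pow_add, pow_mul, h2e, one_pow, one_mul, hc]
  have h0 : ((2 ^ c * p + r : ℕ) : ZMod m) = 0 := by
    push_cast
    rw [hp, h1, tres]
    calc (2:ZMod m)^c0 * (-(r:ZMod m) * ((2:ZMod m)^c0)⁻¹) + r
        = ((2:ZMod m)^c0 * ((2:ZMod m)^c0)⁻¹) * (-(r:ZMod m)) + r := by ring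
      _ = 0 := by rw [ZMod.mul_inv_of_unit _ hu]; ring
  exact (ZMod.natCast_eq_zero_iff _ _).mp h0

lemma tres_ne_zero (m : ℕ) [NeZero m] (r c0 : ℕ) (hu : IsUnit ((2:ZMod m)^c0))
    (hr : ¬ (m ∣ r)) : tres r m c0 ≠ 0 := by
  intro h
  have h2 : (-(r:ZMod m) * ((2:ZMod m)^c0)⁻¹) * (2:ZMod m)^c0 = 0 := by
    rw [← tres, h, zero_mul]
  rw [mul_assoc, ZMod.inv_mul_of_unit _ hu, mul_one, neg_eq_zero] at h2
  exact hr ((ZMod.natCast_eq_zero_iff _ _).mp h2)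

lemma unit_two_pow (m c0 : ℕ) (j : ZMod m) (hj : (2:ZMod m) * j = 1) :
    IsUnit ((2:ZMod m)^c0) := (IsUnit.of_mul_eq_one _ hj).pow c0

lemma u3 (c0 : ℕ) : IsUnit ((2:ZMod 3)^c0) := unit_two_pow 3 c0 2 (by decide)
lemma u5 (c0 : ℕ) : IsUnit ((2:ZMod 5)^c0) := unit_two_pow 5 c0 3 (by decide)
lemma u17 (c0 : ℕ) : IsUnit ((2:ZMod 17)^c0) := unit_two_pow 17 c0 9 (by decide)
lemma u257 (c0 : ℕ) : IsUnit ((2:ZMod 257)^c0) := unit_two_pow 257 c0 129 (by decide)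
lemma u641 (c0 : ℕ) : IsUnit ((2:ZMod 641)^c0) := unit_two_pow 641 c0 321 (by decide)
lemma u65537 (c0 : ℕ) : IsUnit ((2:ZMod 65537)^c0) := unit_two_pow 65537 c0 32769 (by decide)
lemma u6700417 (c0 : ℕ) : IsUnit ((2:ZMod 6700417)^c0) :=
  unit_two_pow 6700417 c0 3350209 (by decide)

lemma not_prime_of_dvd_lt {m q : ℕ} (hq : q.Prime) (hdvd : m ∣ q) (h1 : 1 < m)
    (hlt : m < q) : False := by
  rcases hq.eq_one_or_self_of_dvd m hdvd with h | h <;> omega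

set_option maxRecDepth 10000 in
lemma covering (r p c : ℕ)
    (e3 : (p : ZMod 3) = tres r 3 1) (e5 : (p : ZMod 5) = tres r 5 2)
    (e17 : (p : ZMod 17) = tres r 17 4) (e257 : (p : ZMod 257) = tres r 257 8)
    (e65537 : (p : ZMod 65537) = tres r 65537 16)
    (e641 : (p : ZMod 641) = tres r 641 32)
    (e6700417 : (p : ZMod 6700417) = tres r 6700417 0)
    (hbig : 6700417 + r < p) (hc : 1 ≤ c) :
    ¬ (2 ^ c * p + r).Prime := by
  intro hq
  have h2c : 2 ≤ 2 ^ c := by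
    calc (2:ℕ) = 2 ^ 1 := rfl
    _ ≤ 2 ^ c := Nat.pow_le_pow_right (by norm_num) hc
  have h2cp : 2 * p ≤ 2 ^ c * p := Nat.mul_le_mul_right p h2c
  have hcover : c % 2 = 1 ∨ c % 4 = 2 ∨ c % 8 = 4 ∨ c % 16 = 8 ∨ c % 32 = 16 ∨
      c % 64 = 32 ∨ c % 64 = 0 := by omega
  rcases hcover with h | h | h | h | h | h | h
  · exact not_prime_of_dvd_lt hq (cover_one 3 r p c 2 1 (by decide) (u3 1) h e3)
      (by norm_num) (by omega)
  · exact not_prime_of_dvd_lt hq (cover_one 5 r p c 4 2 (by decide) (u5 2) h e5)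
      (by norm_num) (by omega)
  · exact not_prime_of_dvd_lt hq (cover_one 17 r p c 8 4 (by decide) (u17 4) h e17)
      (by norm_num) (by omega)
  · exact not_prime_of_dvd_lt hq (cover_one 257 r p c 16 8 (by decide) (u257 8) h e257)
      (by norm_num) (by omega)
  · exact not_prime_of_dvd_lt hq (cover_one 65537 r p c 32 16 (by decide) (u65537 16) h e65537)
      (by norm_num) (by omega)
  · exact not_prime_of_dvd_lt hq (cover_one 641 r p c 64 32 (by decide) (u641 32) h e641)
      (by norm_num) (by omega)
  · exact not_prime_of_dvd_lt hq (cover_one 6700417 r p c 64 0 (by decide) (u6700417 0) h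
      e6700417) (by norm_num) (by omega)

/-! ### Chinese remainder construction -/

def covL : List ℕ := [8, 3, 5, 17, 257, 641, 65537, 6700417]

def c0f (m : ℕ) : ℕ :=
  if m = 3 then 1 else if m = 5 then 2 else if m = 17 then 4 else if m = 257 then 8
  else if m = 65537 then 16 else if m = 641 then 32 else 0

def af (r m : ℕ) : ℕ := if m = 8 then (r + 6) % 8 else (tres r m (c0f m)).val

lemma covL_pairwise : covL.Pairwise (Function.onFun Nat.Coprime id) := by decide

def bigK (r : ℕ) : ℕ := Nat.chineseRemainderOfList (af r) id covL covL_pairwise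

lemma bigK_modEq (r m : ℕ) (hm : m ∈ covL) : bigK r ≡ af r m [MOD m] :=
  (Nat.chineseRemainderOfList (af r) id covL covL_pairwise).prop m hm

lemma cast_eq_tres (m : ℕ) [NeZero m] (r p : ℕ)
    (h : p ≡ (tres r m (c0f m)).val [MOD m]) : (p : ZMod m) = tres r m (c0f m) := by
  have h2 := (ZMod.natCast_eq_natCast_iff _ _ _).mpr h
  rwa [ZMod.natCast_zmod_val] at h2

lemma coprime_of_tres (m : ℕ) [NeZero m] (hm : m.Prime) (r K : ℕ)
    (hu : IsUnit ((2:ZMod m)^(c0f m))) (hr : ¬ m ∣ r)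
    (h : K ≡ (tres r m (c0f m)).val [MOD m]) : Nat.Coprime K m := by
  rw [Nat.coprime_comm]
  refine (Nat.Prime.coprime_iff_not_dvd hm).mpr ?_
  intro hdvd
  apply tres_ne_zero m r (c0f m) hu hr
  have h0 : (K : ZMod m) = 0 := (ZMod.natCast_eq_zero_iff _ _).mpr hdvd
  have h1 := cast_eq_tres m r K h
  rw [h0] at h1
  exact h1.symm

lemma bigK_unit (r : ℕ) (hrodd : Odd r) (h3 : ¬ 3 ∣ r) (h5 : ¬ 5 ∣ r) (h17 : ¬ 17 ∣ r)
    (h257 : ¬ 257 ∣ r) (h641 : ¬ 641 ∣ r) (h65537 : ¬ 65537 ∣ r) (h6700417 : ¬ 6700417 ∣ r) :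
    IsUnit ((bigK r : ℕ) : ZMod 147573952589676412920) := by
  rw [ZMod.isUnit_iff_coprime]
  have hprod : (147573952589676412920 : ℕ) = (covL.map id).prod := by decide
  rw [hprod]
  rw [Nat.coprime_list_prod_right_iff]
  intro m hm
  have haf : ∀ m', m' ∈ covL → m' ≠ 8 → bigK r ≡ (tres r m' (c0f m')).val [MOD m'] := by
    intro m' hm' h8
    have := bigK_modEq r m' hm'
    rwa [af, if_neg h8] at this
  fin_cases hm
  · have h := bigK_modEq r 8 (by decide)
    rw [af, if_pos rfl] at h
    have hmod : bigK r % 8 = (r + 6) % 8 % 8 := h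
    have hro : r % 2 = 1 := Nat.odd_iff.mp hrodd
    have hodd : bigK r % 2 = 1 := by omega
    have hc2 : Nat.Coprime (bigK r) 2 := Nat.coprime_two_right.mpr (Nat.odd_iff.mpr hodd)
    have : Nat.Coprime (bigK r) (2 ^ 3) := hc2.pow_right 3
    simpa using this
  · exact coprime_of_tres 3 (by norm_num) r _ (u3 _) h3 (haf 3 (by decide) (by decide))
  · exact coprime_of_tres 5 (by norm_num) r _ (u5 _) h5 (haf 5 (by decide) (by decide))
  · exact coprime_of_tres 17 (by norm_num) r _ (u17 _) h17 (haf 17 (by decide) (by decide))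
  · exact coprime_of_tres 257 (by norm_num) r _ (u257 _) h257 (haf 257 (by decide) (by decide))
  · exact coprime_of_tres 641 (by norm_num) r _ (u641 _) h641 (haf 641 (by decide) (by decide))
  · exact coprime_of_tres 65537 (by norm_num) r _ (u65537 _) h65537
      (haf 65537 (by decide) (by decide))
  · exact coprime_of_tres 6700417 (by norm_num) r _ (u6700417 _) h6700417
      (haf 6700417 (by decide) (by decide))

/-! ### Main theorem -/

theorem infinite_primes_two_pow_nontotient (r : ℕ) (hr : 0 < r) (hrodd : Odd r)
    (h3 : ¬ 3 ∣ r) (h5 : ¬ 5 ∣ r) (h17 : ¬ 17 ∣ r) (h257 : ¬ 257 ∣ r)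
    (h641 : ¬ 641 ∣ r) (h65537 : ¬ 65537 ∣ r) (h6700417 : ¬ 6700417 ∣ r) :
    {p : ℕ | p.Prime ∧ ∀ α : ℕ, ¬ ∃ x : ℕ, 0 < x ∧ schemmel r x = 2 ^ α * p}.Infinite := by
  have hunit := bigK_unit r hrodd h3 h5 h17 h257 h641 h65537 h6700417
  have hdir := Nat.infinite_setOfPred_prime_and_eq_mod hunit
  have hinf : ({p : ℕ | p.Prime ∧ (p : ZMod 147573952589676412920)
      = ((bigK r : ℕ) : ZMod 147573952589676412920)} \ Set.Iic (6700417 + r)).Infinite :=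
    hdir.diff (Set.finite_Iic (6700417 + r))
  refine hinf.mono ?_
  rintro p ⟨⟨hp, hpz⟩, hnb⟩
  have hbig : 6700417 + r < p := by simpa using hnb
  have hmodN : p ≡ bigK r [MOD 147573952589676412920] :=
    (ZMod.natCast_eq_natCast_iff _ _ _).mp hpz
  have hmod : ∀ m ∈ covL, p ≡ af r m [MOD m] := by
    intro m hm
    refine Nat.ModEq.trans (hmodN.of_dvd ?_) (bigK_modEq r m hm)
    fin_cases hm <;> norm_num
  have etres : ∀ m, m ∈ covL → m ≠ 8 → ∀ [NeZero m], (p : ZMod m) = tres r m (c0f m) := by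
    intro m hm h8 _
    refine cast_eq_tres m r p ?_
    have := hmod m hm
    rwa [af, if_neg h8] at this
  have h8 : p % 8 = (r + 6) % 8 := by
    have := hmod 8 (by decide)
    rw [af, if_pos rfl] at this
    have h' : p % 8 = (r + 6) % 8 % 8 := this
    omega
  have hro : r % 2 = 1 := Nat.odd_iff.mp hrodd
  have hpodd : Odd p := Nat.odd_iff.mpr (by omega)
  refine ⟨hp, ?_⟩
  rintro α ⟨x, hx, hs⟩
  rcases schemmel_structure r p α x hrodd hp hpodd hs with ⟨c, hc1, hcp⟩ | ⟨b, hb⟩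
  · have e3 := etres 3 (by decide) (by decide)
    have e5 := etres 5 (by decide) (by decide)
    have e17 := etres 17 (by decide) (by decide)
    have e257 := etres 257 (by decide) (by decide)
    have e641 := etres 641 (by decide) (by decide)
    have e65537 := etres 65537 (by decide) (by decide)
    have e6700417 := etres 6700417 (by decide) (by decide)
    have hc0f3 : c0f 3 = 1 := by decide
    exact covering r p c (by simpa [c0f] using e3) (by simpa [c0f] using e5)
      (by simpa [c0f] using e17) (by simpa [c0f] using e257)
      (by simpa [c0f] using e65537) (by simpa [c0f] using e641)
      (by simpa [c0f] using e6700417) hbig hc1 hcp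
  · rcases le_or_gt b 2 with hb2 | hb3
    · have : (2:ℕ) ^ b ≤ 2 ^ 2 := Nat.pow_le_pow_right (by norm_num) hb2
      omega
    · have hdv : (2:ℕ) ^ 3 ∣ 2 ^ b := pow_dvd_pow 2 hb3
      have h0 : (2:ℕ) ^ b % 8 = 0 := by
        rcases hdv with ⟨k, hk⟩
        omega
      omega
end

section
/- Suppose r + 1 is prime, t is a positive integer, and p = (r+1)^t + r is prime. Then for every nonnegative integer α with t ≤ α, S_r((r+1)^{α−t+1} · p²) = (r+1)^α · p. -/
theorem schemmel_pow_mul_sq (r t α p : ℕ) (hr : (r + 1).Prime) (ht : 0 < t)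
    (hp : p = (r + 1) ^ t + r) (hpp : p.Prime) (htα : t ≤ α) :
    schemmel r ((r + 1) ^ (α - t + 1) * p ^ 2) = (r + 1) ^ α * p := by
  have hq := hr.two_le
  have hqp : r + 1 < p := by
    have : r + 1 ≤ (r + 1) ^ t := Nat.le_self_pow ht.ne' _
    omega
  have hne : r + 1 ≠ p := hqp.ne
  have hfact : ((r + 1) ^ (α - t + 1) * p ^ 2).factorization =
      Finsupp.single (r + 1) (α - t + 1) + Finsupp.single p 2 := by
    rw [Nat.factorization_mul (by positivity) (pow_ne_zero _ hpp.pos.ne'),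
      hr.factorization_pow, hpp.factorization_pow]
  unfold schemmel
  rw [hfact, Finsupp.prod_add_index_of_disjoint]
  · have h1 : ¬ (r + 1 ≤ r) := by omega
    have h2 : ¬ (p ≤ r) := by omega
    simp only [Finsupp.prod, Finsupp.support_single_ne_zero _ (by omega : α - t + 1 ≠ 0),
      Finsupp.support_single_ne_zero _ (by omega : (2:ℕ) ≠ 0), Finset.prod_singleton,
      Finsupp.single_eq_same, if_neg h1, if_neg h2]
    have hpr : p - r = (r + 1) ^ t := by omega
    rw [hpr]
    rw [show r + 1 - r = 1 by omega, mul_one, show (2:ℕ) - 1 = 1 from rfl, pow_one,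
      mul_comm p, ← mul_assoc, ← pow_add, show α - t + 1 - 1 + t = α by omega]
  · rw [Finsupp.support_single_ne_zero _ (by omega : α - t + 1 ≠ 0),
      Finsupp.support_single_ne_zero _ (by omega : (2:ℕ) ≠ 0)]
    simp [hne, Ne.symm hne]
end

section
/- Let r and p be such that p is prime and S_r(x) = (r+1)^α · p for some positive integers x, α, where r+1 is prime. If p² divides x, then p − r = (r+1)^t for some nonnegative integer t ≤ α; and if p² does not divide x, then there exists a prime q dividing x such that q − r = (r+1)^t · p for some nonnegative integer t ≤ α. -/
lemma divisor_structure {q p d α : ℕ} (hq : q.Prime) (hp : p.Prime) (hd : d ∣ q ^ α * p) :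
    ∃ t ≤ α, d = q ^ t ∨ d = q ^ t * p := by
  by_cases hpd : p ∣ d
  · obtain ⟨e, rfl⟩ := hpd
    have he : e ∣ q ^ α := by
      have : p * e ∣ p * q ^ α := by rwa [mul_comm (q ^ α) p] at hd
      exact (Nat.mul_dvd_mul_iff_left hp.pos).mp this
    obtain ⟨t, ht, rfl⟩ := (Nat.dvd_prime_pow hq).mp he
    exact ⟨t, ht, Or.inr (mul_comm p _)⟩
  · by_cases hqp : q = p
    · subst hqp
      rw [← pow_succ] at hd
      obtain ⟨t, ht, rfl⟩ := (Nat.dvd_prime_pow hq).mp hd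
      rcases Nat.eq_zero_or_pos t with rfl | htpos
      · exact ⟨0, Nat.zero_le _, Or.inl rfl⟩
      · exact absurd (dvd_pow_self q htpos.ne') hpd
    · have hcop : Nat.Coprime d p := (hp.coprime_iff_not_dvd.mpr hpd).symm
      have : d ∣ q ^ α := hcop.dvd_of_dvd_mul_right hd
      obtain ⟨t, ht, rfl⟩ := (Nat.dvd_prime_pow hq).mp this
      exact ⟨t, ht, Or.inl rfl⟩

lemma schemmel_factor_dvd {r x q : ℕ} (hx : x ≠ 0) (hq : q.Prime) (hqx : q ∣ x) :
    (if q ≤ r then 0 else q ^ (x.factorization q - 1) * (q - r)) ∣ schemmel r x := by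
  unfold schemmel Finsupp.prod
  exact Finset.dvd_prod_of_mem _
    (by rw [Nat.support_factorization]; exact Nat.mem_primeFactors.mpr ⟨hq, hqx, hx⟩)

lemma schemmel_key {r x q : ℕ} (hx : x ≠ 0) (hq : q.Prime) (hqx : q ∣ x)
    (hS : schemmel r x ≠ 0) :
    r < q ∧ (q - r) ∣ schemmel r x ∧ q ^ (x.factorization q - 1) ∣ schemmel r x := by
  have hd := schemmel_factor_dvd (r := r) hx hq hqx
  by_cases hle : q ≤ r
  · rw [if_pos hle] at hd
    exact absurd (Nat.eq_zero_of_zero_dvd hd) hS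
  · rw [if_neg hle] at hd
    exact ⟨Nat.lt_of_not_le hle, (dvd_mul_left _ _).trans hd, (dvd_mul_right _ _).trans hd⟩

theorem preimage_structure_prime_pow_mul (r x α p : ℕ) (hr : (r + 1).Prime)
    (hp : p.Prime) (hx : 0 < x) (hα : 0 < α)
    (h : schemmel r x = (r + 1) ^ α * p) :
    (p ^ 2 ∣ x → ∃ t : ℕ, t ≤ α ∧ p - r = (r + 1) ^ t) ∧
    (¬ p ^ 2 ∣ x → ∃ q : ℕ, q.Prime ∧ q ∣ x ∧
      ∃ t : ℕ, t ≤ α ∧ q - r = (r + 1) ^ t * p) := by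
  have hr1 : 1 ≤ r := by have := hr.two_le; omega
  have hSne : schemmel r x ≠ 0 := by
    rw [h]; exact (Nat.mul_pos (pow_pos hr.pos α) hp.pos).ne'
  constructor
  · intro hp2
    have hpx : p ∣ x := (dvd_pow_self p two_ne_zero).trans hp2
    obtain ⟨hrp, hdvd, -⟩ := schemmel_key hx.ne' hp hpx hSne
    rw [h] at hdvd
    obtain ⟨t, ht, heq | heq⟩ := divisor_structure hr hp hdvd
    · exact ⟨t, ht, heq⟩
    · exfalso
      have h1 : 1 ≤ (r + 1) ^ t := Nat.one_le_pow _ _ (by omega)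
      have h2 : p ≤ (r + 1) ^ t * p := Nat.le_mul_of_pos_left p (by omega)
      omega
  · intro hp2
    have hpS : p ∣ schemmel r x := by rw [h]; exact dvd_mul_left _ _
    unfold schemmel Finsupp.prod at hpS
    obtain ⟨q, hqmem, hpf⟩ := hp.prime.exists_mem_finset_dvd hpS
    rw [Nat.support_factorization] at hqmem
    have hq : q.Prime := Nat.prime_of_mem_primeFactors hqmem
    have hqx : q ∣ x := Nat.dvd_of_mem_primeFactors hqmem
    obtain ⟨hrq, hdvd, -⟩ := schemmel_key hx.ne' hq hqx hSne
    have hpf' : p ∣ q ^ (x.factorization q - 1) * (q - r) := by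
      simpa only [show ¬ q ≤ r from Nat.not_le.mpr hrq, if_false] using hpf
    have hpqr : p ∣ q - r := by
      rcases hp.dvd_mul.mp hpf' with hc | hc
      · exfalso
        have hpq : p = q := ((Nat.prime_dvd_prime_iff_eq hp hq).mp (hp.dvd_of_dvd_pow hc))
        have ha : x.factorization q - 1 ≠ 0 := by
          rintro h0; rw [h0, pow_zero] at hc; exact hp.one_lt.ne' (Nat.dvd_one.mp hc)
        have ha2 : 2 ≤ x.factorization q := by omega
        have : q ^ 2 ∣ x := (pow_dvd_pow q ha2).trans (Nat.ordProj_dvd x q)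
        rw [← hpq] at this
        exact hp2 this
      · exact hc
    rw [h] at hdvd
    obtain ⟨t, ht, heq | heq⟩ := divisor_structure hr hp hdvd
    · -- q - r = (r+1)^t, p ∣ (r+1)^t so p = r+1 and t ≥ 1
      rw [heq] at hpqr
      have hpr : p = r + 1 := ((Nat.prime_dvd_prime_iff_eq hp hr).mp (hp.dvd_of_dvd_pow hpqr))
      have ht1 : 1 ≤ t := by
        rcases Nat.eq_zero_or_pos t with rfl | h1
        · rw [pow_zero] at hpqr; exact absurd (Nat.dvd_one.mp hpqr) hp.one_lt.ne'
        · exact h1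
      refine ⟨q, hq, hqx, t - 1, by omega, ?_⟩
      rw [heq, hpr, ← pow_succ]
      congr 1; omega
    · exact ⟨q, hq, hqx, t, ht, heq⟩
end

section
/- Let m > 1, let q₀, q₁, …, q_N be distinct odd primes with ord_{q₀}(m) = 2^N and ord_{q_n}(m) = 2^n for 1 ≤ n ≤ N, and let x be a positive integer satisfying x + m ≡ 1 (mod q₀) and m^{2^{n−1}} x + m ≡ 1 (mod q_n) for 1 ≤ n ≤ N. Then for every nonnegative integer t, exactly one of the primes q₀, …, q_N divides m^t x + m − 1. -/
private lemma modeq_pow_iff (k t : ℕ) :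
    t ≡ 2 ^ k [MOD 2 ^ (k + 1)] ↔ 2 ^ k ∣ t ∧ ¬ 2 ^ (k + 1) ∣ t := by
  constructor
  · intro h
    have hlt : (2:ℕ) ^ k < 2 ^ (k + 1) := Nat.pow_lt_pow_right one_lt_two (Nat.lt_succ_self k)
    have h1 : t % 2 ^ (k + 1) = 2 ^ k := by
      rw [Nat.ModEq] at h
      rw [h]
      exact Nat.mod_eq_of_lt hlt
    have ht : t = 2 ^ (k + 1) * (t / 2 ^ (k + 1)) + 2 ^ k := by
      conv_lhs => rw [← Nat.div_add_mod t (2 ^ (k + 1))]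
      rw [h1]
    constructor
    · rw [ht]
      exact Nat.dvd_add (Dvd.dvd.mul_right (pow_dvd_pow 2 (Nat.le_succ k)) _) dvd_rfl
    · intro hdvd
      have h2 : (2:ℕ) ^ (k + 1) ∣ 2 ^ k := by
        rw [ht] at hdvd
        exact (Nat.dvd_add_right (dvd_mul_right _ _)).mp hdvd
      have := Nat.le_of_dvd (pow_pos two_pos k) h2
      omega
  · rintro ⟨⟨u, rfl⟩, h2⟩
    have hu : u % 2 = 1 := by
      rcases Nat.mod_two_eq_zero_or_one u with h | h
      · exfalso
        obtain ⟨v, rfl⟩ := Nat.dvd_of_mod_eq_zero h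
        exact h2 ⟨v, by ring⟩
      · exact h
    show (2 ^ k * u) % 2 ^ (k + 1) = 2 ^ k % 2 ^ (k + 1)
    rw [pow_succ, Nat.mul_mod_mul_left, hu, mul_one, eq_comm]
    exact Nat.mod_eq_of_lt ((Nat.lt_mul_iff_one_lt_right (pow_pos two_pos k)).mpr one_lt_two)

theorem unique_prime_divisor_of_progression (m N : ℕ) (hm : 1 < m)
    (q : Fin (N + 1) → ℕ) (hq : ∀ i, (q i).Prime) (hqodd : ∀ i, Odd (q i))
    (hinj : Function.Injective q)
    (hord0 : orderOf ((m : ZMod (q 0))) = 2 ^ N)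
    (hordn : ∀ n : Fin (N + 1), 1 ≤ (n : ℕ) →
      orderOf ((m : ZMod (q n))) = 2 ^ (n : ℕ))
    (x : ℕ) (hx : 0 < x)
    (hx0 : x + m ≡ 1 [MOD q 0])
    (hxn : ∀ n : Fin (N + 1), 1 ≤ (n : ℕ) →
      m ^ (2 ^ ((n : ℕ) - 1)) * x + m ≡ 1 [MOD q n]) :
    ∀ t : ℕ, ∃! i : Fin (N + 1), q i ∣ m ^ t * x + m - 1 := by
  intro t
  have key : ∀ i : Fin (N + 1), (q i ∣ m ^ t * x + m - 1 ↔
      (if (i : ℕ) = 0 then 2 ^ N ∣ t else 2 ^ ((i : ℕ) - 1) ∣ t ∧ ¬ 2 ^ (i : ℕ) ∣ t)) := by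
    intro i
    haveI : Fact (q i).Prime := ⟨hq i⟩
    have h1 : (1 : ℕ) ≤ m ^ t * x + m := le_trans (by omega : 1 ≤ m) (Nat.le_add_left m _)
    have hdvd : q i ∣ m ^ t * x + m - 1 ↔ ((m : ZMod (q i)) ^ t * x = 1 - m) := by
      rw [← Nat.modEq_iff_dvd' h1, ← ZMod.natCast_eq_natCast_iff]
      push_cast
      rw [eq_comm, eq_sub_iff_add_eq]
    rw [hdvd]
    by_cases hi0 : (i : ℕ) = 0
    · have hie : i = 0 := Fin.ext hi0
      subst hie
      rw [if_pos hi0]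
      have hx0' : (x : ZMod (q 0)) = 1 - m := by
        have := (ZMod.natCast_eq_natCast_iff _ _ _).mpr hx0
        push_cast at this
        rwa [eq_sub_iff_add_eq]
      rw [← hx0']
      by_cases hm1 : (m : ZMod (q 0)) = 1
      · have hN0 : N = 0 := by
          have : orderOf ((m : ZMod (q 0))) = 1 := by rw [hm1, orderOf_one]
          rw [hord0] at this
          have h2 := Nat.one_lt_two_pow_iff (n := N)
          omega
        subst hN0
        simp [hm1]
      · have hxne : (x : ZMod (q 0)) ≠ 0 := by
          rw [hx0']
          exact sub_ne_zero.mpr (Ne.symm hm1)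
        constructor
        · intro h
          have hmt : (m : ZMod (q 0)) ^ t = 1 :=
            mul_right_cancel₀ hxne (h.trans (one_mul _).symm)
          rw [← hord0]
          exact orderOf_dvd_of_pow_eq_one hmt
        · intro h
          rw [← hord0] at h
          rw [orderOf_dvd_iff_pow_eq_one.mp h, one_mul]
    · have hn1 : 1 ≤ (i : ℕ) := Nat.one_le_iff_ne_zero.mpr hi0
      obtain ⟨n', hn'⟩ : ∃ n', (i : ℕ) = n' + 1 := ⟨(i : ℕ) - 1, by omega⟩
      have hord := hordn i hn1
      have hxi : (m : ZMod (q i)) ^ (2 ^ ((i : ℕ) - 1)) * x = 1 - m := by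
        have := (ZMod.natCast_eq_natCast_iff _ _ _).mpr (hxn i hn1)
        push_cast at this
        rwa [eq_sub_iff_add_eq]
      have hm1 : (m : ZMod (q i)) ≠ 1 := by
        intro h
        rw [h, orderOf_one] at hord
        have h2 := Nat.one_lt_two_pow_iff (n := (i : ℕ))
        omega
      have hsub : (1 : ZMod (q i)) - m ≠ 0 := sub_ne_zero.mpr (Ne.symm hm1)
      have hprod : (m : ZMod (q i)) ^ (2 ^ ((i : ℕ) - 1)) * x ≠ 0 := by rw [hxi]; exact hsub
      have hxne : (x : ZMod (q i)) ≠ 0 := right_ne_zero_of_mul hprod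
      have hmne : (m : ZMod (q i)) ≠ 0 := by
        have := left_ne_zero_of_mul hprod
        exact fun h => this (by rw [h]; exact zero_pow (by positivity))
      rw [if_neg hi0, ← hxi]
      have hcancel : ((m : ZMod (q i)) ^ t * x = (m : ZMod (q i)) ^ (2 ^ ((i : ℕ) - 1)) * x)
          ↔ (m : ZMod (q i)) ^ t = (m : ZMod (q i)) ^ (2 ^ ((i : ℕ) - 1)) :=
        ⟨fun h => mul_right_cancel₀ hxne h, fun h => by rw [h]⟩
      rw [hcancel]
      obtain ⟨u, hu⟩ := (isUnit_iff_ne_zero.mpr hmne)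
      have hupow : ∀ s : ℕ, ((u ^ s : (ZMod (q i))ˣ) : ZMod (q i)) = (m : ZMod (q i)) ^ s := by
        intro s; rw [Units.val_pow_eq_pow_val, hu]
      have hiff : (m : ZMod (q i)) ^ t = (m : ZMod (q i)) ^ (2 ^ ((i : ℕ) - 1))
          ↔ u ^ t = u ^ (2 ^ ((i : ℕ) - 1)) := by
        rw [← hupow, ← hupow, Units.ext_iff]
      rw [hiff, pow_eq_pow_iff_modEq]
      have hou : orderOf u = 2 ^ (i : ℕ) := by
        rw [← orderOf_units, hu, hord]
      rw [hou, hn']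
      have : n' + 1 - 1 = n' := by omega
      rw [this]
      exact modeq_pow_iff n' t
  have harith : ∃! i : Fin (N + 1),
      (if (i : ℕ) = 0 then 2 ^ N ∣ t else 2 ^ ((i : ℕ) - 1) ∣ t ∧ ¬ 2 ^ (i : ℕ) ∣ t) := by
    by_cases hNt : 2 ^ N ∣ t
    · refine ⟨0, by simpa using hNt, ?_⟩
      intro j hj
      by_contra hj0
      have hjv : (j : ℕ) ≠ 0 := fun h => hj0 (Fin.ext h)
      rw [if_neg hjv] at hj
      exact hj.2 (dvd_trans (pow_dvd_pow 2 (by omega : (j : ℕ) ≤ N)) hNt)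
    · have ht0 : t ≠ 0 := by rintro rfl; exact hNt (dvd_zero _)
      obtain ⟨k, u, hu2, huk⟩ := Nat.exists_eq_pow_mul_and_not_dvd ht0 2 (by norm_num)
      have hdk : ∀ a, 2 ^ a ∣ t ↔ a ≤ k := by
        intro a
        constructor
        · intro ha
          by_contra hak
          push_neg at hak
          have h2 : (2:ℕ) ^ (k + 1) ∣ t := dvd_trans (pow_dvd_pow 2 hak) ha
          rw [huk, pow_succ] at h2
          exact hu2 ((mul_dvd_mul_iff_left (a := (2:ℕ)^k)
            (pow_ne_zero k two_ne_zero)).mp h2)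
        · intro ha
          rw [huk]
          exact Dvd.dvd.mul_right (pow_dvd_pow 2 ha) u
      have hkN : k < N := by
        by_contra h
        push_neg at h
        exact hNt ((hdk N).mpr h)
      refine ⟨⟨k + 1, by omega⟩, ?_, ?_⟩
      · simp only [Fin.val_mk, Nat.add_sub_cancel]
        rw [if_neg (by omega : ¬ k + 1 = 0)]
        refine ⟨(hdk k).mpr le_rfl, fun h => ?_⟩
        have := (hdk (k + 1)).mp h
        omega
      · intro j hj
        have hjv0 : (j : ℕ) ≠ 0 := by
          intro h
          rw [if_pos h] at hj
          exact hNt hj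
        rw [if_neg hjv0] at hj
        have h1 := (hdk _).mp hj.1
        have h2 : ¬ ((j : ℕ) ≤ k) := fun h => hj.2 ((hdk _).mpr h)
        exact Fin.ext (by show (j : ℕ) = k + 1; omega)
  obtain ⟨i, hi, hu⟩ := harith
  exact ⟨i, (key i).mpr hi, fun j hj => hu j ((key j).mp hj)⟩
end

section
/- Let r ≥ 3 be odd and let p be a prime such that p ≠ 2^t + r for all nonnegative integers t, and 2^t · p + r is not prime for all nonnegative integers t. Then for every nonnegative integer α, 2^α · p is a Schemmel nontotient number of order r. -/
theorem two_pow_mul_nontotient (r p : ℕ) (hrodd : Odd r) (hr3 : 3 ≤ r)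
    (hp : p.Prime) (h1 : ∀ t : ℕ, p ≠ 2 ^ t + r)
    (h2 : ∀ t : ℕ, ¬ (2 ^ t * p + r).Prime) :
    ∀ α : ℕ, ¬ ∃ x : ℕ, 0 < x ∧ schemmel r x = 2 ^ α * p := by
  rintro α ⟨x, hx0, hx⟩
  rw [schemmel, Finsupp.prod] at hx
  set f : ℕ → ℕ → ℕ := fun q a => if q ≤ r then 0 else q ^ (a - 1) * (q - r) with hf
  have hne : (2:ℕ) ^ α * p ≠ 0 := Nat.mul_ne_zero (pow_pos (by norm_num) α).ne' hp.pos.ne'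
  have hpdvd : p ∣ ∏ q ∈ x.factorization.support, f q (x.factorization q) := by
    rw [hx]; exact dvd_mul_left p _
  obtain ⟨q, hqmem, hqdvd⟩ := hp.prime.exists_mem_finset_dvd hpdvd
  have hqprime : q.Prime :=
    Nat.prime_of_mem_primeFactors (by rwa [Nat.support_factorization] at hqmem)
  have hdvdprod : f q (x.factorization q) ∣ 2 ^ α * p := by
    rw [← hx]; exact Finset.dvd_prod_of_mem _ hqmem
  have hrq : ¬ q ≤ r := by
    intro h
    apply hne
    rw [← hx]
    exact Finset.prod_eq_zero hqmem (by simp [hf, h])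
  have hfq : f q (x.factorization q) = q ^ (x.factorization q - 1) * (q - r) :=
    if_neg hrq
  rw [hfq] at hqdvd hdvdprod
  push_neg at hrq
  rcases (Nat.Prime.dvd_mul hp).mp hqdvd with h | h
  · -- p ∣ q^(a-1), so p = q
    have hpq : p = q := (Nat.prime_dvd_prime_iff_eq hp hqprime).mp (hp.prime.dvd_of_dvd_pow h)
    subst hpq
    have hdvd2 : (p - r) ∣ 2 ^ α * p := dvd_trans (dvd_mul_left _ _) hdvdprod
    have hnd : ¬ p ∣ (p - r) := by
      intro hd
      have := Nat.le_of_dvd (by omega) hd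
      omega
    have hcop : (p - r).Coprime p :=
      Nat.coprime_comm.mp ((Nat.Prime.coprime_iff_not_dvd hp).mpr hnd)
    have hdvd3 : (p - r) ∣ 2 ^ α := hcop.dvd_of_dvd_mul_right hdvd2
    obtain ⟨t, -, ht⟩ := (Nat.dvd_prime_pow Nat.prime_two).mp hdvd3
    apply h1 t
    have : 0 < 2 ^ t := pow_pos (by norm_num) t
    omega
  · -- p ∣ q - r
    obtain ⟨d, hd⟩ := h
    have hdvd2 : p * d ∣ 2 ^ α * p := by
      rw [← hd]; exact dvd_trans (dvd_mul_left _ _) hdvdprod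
    rw [mul_comm (2 ^ α) p] at hdvd2
    have hdd : d ∣ 2 ^ α := (mul_dvd_mul_iff_left hp.pos.ne').mp hdvd2
    obtain ⟨t, -, ht⟩ := (Nat.dvd_prime_pow Nat.prime_two).mp hdd
    apply h2 t
    have hq' : q = p * d + r := (Nat.sub_eq_iff_eq_add (le_of_lt hrq)).mp hd
    have : 2 ^ t * p + r = q := by rw [hq', ht, mul_comm]
    rwa [this]
end
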